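/- Let K be a linearly ordered field and let x ∈ K be a nonzero element that is algebraic over ℚ (i.e., x is a root of some nonzero polynomial with rational coefficients). Then there exists a positive natural number n such that 1/n ≤ |x| and |x| ≤ n, where |x| = max{−x, x}. In particular, a nonzero element algebraic over ℚ is neither infinitesimal nor infinitely large. -/

import Mathlib

open Polynomial Finset

lemma aux_abs_le_nat {K : Type u} [Field K] [LinearOrder K] [IsStrictOrderedRing K]
    (x : K) (halg : IsAlgebraic ℚ x) :
    ∃ n : ℕ, 0 < n ∧ |x| ≤ (n : K) := by
  obtain ⟨p, hp, hpx⟩ := halg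
  set d := p.natDegree with hd
  have hlc : p.coeff d ≠ 0 := Polynomial.leadingCoeff_ne_zero.mpr hp
  have hd0 : d ≠ 0 := by
    intro h0
    have hpc : p = Polynomial.C (p.coeff 0) := Polynomial.eq_C_of_natDegree_eq_zero (by omega)
    rw [hpc, Polynomial.aeval_C] at hpx
    have : (p.coeff 0 : K) = 0 := hpx
    exact hlc (by rw [h0]; exact_mod_cast this)
  obtain ⟨k, hk⟩ := Nat.exists_eq_succ_of_ne_zero hd0
  set c : ℚ := |p.coeff d| with hc
  have hcpos : 0 < c := abs_pos.mpr hlc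
  set S : ℚ := ∑ i ∈ range d, |p.coeff i| with hS
  obtain ⟨m, hm⟩ := exists_nat_ge (S / c)
  refine ⟨m + 1, Nat.succ_pos m, ?_⟩
  rcases le_or_gt |x| 1 with hx1 | hx1
  · calc |x| ≤ 1 := hx1
      _ ≤ ((m + 1 : ℕ) : K) := by exact_mod_cast Nat.one_le_iff_ne_zero.mpr (Nat.succ_ne_zero m)
  · have hx1' : (1 : K) ≤ |x| := hx1.le
    have hsum : ∑ i ∈ range (d + 1), (p.coeff i : K) * x ^ i = 0 := by
      have h := Polynomial.aeval_eq_sum_range (R := ℚ) (S := K) (p := p) x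
      rw [hpx] at h
      have h2 : ∑ i ∈ range (d + 1), (p.coeff i : K) * x ^ i
          = ∑ i ∈ range (d + 1), p.coeff i • x ^ i :=
        Finset.sum_congr rfl fun i _ => (Rat.smul_def _ _).symm
      rw [h2, ← h]
    rw [Finset.sum_range_succ] at hsum
    have hkey : (p.coeff d : K) * x ^ d = -∑ i ∈ range d, (p.coeff i : K) * x ^ i := by
      linarith [hsum]
    have habs : (c : K) * |x| ^ d ≤ ∑ i ∈ range d, (|p.coeff i| : K) * |x| ^ i := by
      have h1 : |(p.coeff d : K) * x ^ d| = (c : K) * |x| ^ d := by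
        rw [abs_mul, abs_pow, hc]; push_cast [abs_abs]; ring
      calc (c : K) * |x| ^ d = |(p.coeff d : K) * x ^ d| := h1.symm
        _ = |∑ i ∈ range d, (p.coeff i : K) * x ^ i| := by rw [hkey, abs_neg]
        _ ≤ ∑ i ∈ range d, |(p.coeff i : K) * x ^ i| := Finset.abs_sum_le_sum_abs _ _
        _ = ∑ i ∈ range d, (|p.coeff i| : K) * |x| ^ i := by
            refine Finset.sum_congr rfl fun i _ => ?_
            push_cast [abs_mul, abs_pow]; ring
    have hstep : ∑ i ∈ range d, (|p.coeff i| : K) * |x| ^ i ≤ (S : K) * |x| ^ k := by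
      rw [hS]; push_cast
      rw [Finset.sum_mul]
      refine Finset.sum_le_sum fun i hi => ?_
      have hik : i ≤ k := by
        have := Finset.mem_range.mp hi; omega
      exact mul_le_mul_of_nonneg_left (pow_le_pow_right₀ hx1' hik)
        (by positivity)
    have hdk : |x| ^ d = |x| ^ k * |x| := by rw [hk, pow_succ]
    have hfin : (c : K) * |x| ≤ (S : K) := by
      have h2 : ((c : K) * |x|) * |x| ^ k ≤ (S : K) * |x| ^ k := by
        calc ((c : K) * |x|) * |x| ^ k = (c : K) * |x| ^ d := by rw [hdk]; ring
          _ ≤ ∑ i ∈ range d, (|p.coeff i| : K) * |x| ^ i := habs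
          _ ≤ (S : K) * |x| ^ k := hstep
      have hxk : (0 : K) < |x| ^ k := by positivity
      exact le_of_mul_le_mul_right h2 hxk
    have hcK : (0 : K) < (c : K) := by exact_mod_cast hcpos
    have : |x| ≤ (S : K) / (c : K) := by
      rw [le_div_iff₀ hcK]; linarith [hfin]
    calc |x| ≤ (S : K) / (c : K) := this
      _ = ((S / c : ℚ) : K) := by push_cast; ring
      _ ≤ ((m : ℚ) : K) := by exact_mod_cast hm
      _ ≤ ((m + 1 : ℕ) : K) := by push_cast; linarith

theorem algebraic_is_unit_in_ordered_field {K : Type u} [Field K] [LinearOrder K] [IsStrictOrderedRing K]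
    (x : K) (hx : x ≠ 0) (halg : IsAlgebraic ℚ x) :
    ∃ n : ℕ, 0 < n ∧ 1 / (n : K) ≤ |x| ∧ |x| ≤ (n : K) := by
  obtain ⟨n₁, hn₁, hb₁⟩ := aux_abs_le_nat x halg
  obtain ⟨n₂, hn₂, hb₂⟩ := aux_abs_le_nat x⁻¹ halg.inv
  rw [abs_inv] at hb₂
  have hxpos : (0 : K) < |x| := abs_pos.mpr hx
  have hn₂K : (0 : K) < (n₂ : K) := by exact_mod_cast hn₂
  refine ⟨n₁ + n₂, by omega, ?_, ?_⟩
  · have h1 : 1 / (n₂ : K) ≤ |x| := by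
      rw [div_le_iff₀ hn₂K]
      have := (inv_le_comm₀ hxpos hn₂K).mp hb₂
      calc (1 : K) = |x| * |x|⁻¹ := by field_simp
        _ ≤ |x| * (n₂ : K) := by
            exact mul_le_mul_of_nonneg_left hb₂ hxpos.le
    calc 1 / ((n₁ + n₂ : ℕ) : K) ≤ 1 / (n₂ : K) := by
          apply one_div_le_one_div_of_le hn₂K; push_cast; linarith [Nat.cast_nonneg (α := K) n₁]
      _ ≤ |x| := h1
  · calc |x| ≤ (n₁ : K) := hb₁
      _ ≤ ((n₁ + n₂ : ℕ) : K) := by push_cast; linarith [Nat.cast_nonneg (α := K) n₂]
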